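/- Let C = V(x₀(x₀³x₂ + x₁⁴)) ⊂ ℙ²_ℂ, a quartic with defining polynomial f = x₀⁴x₂ + x₀x₁⁴. The local Milnor number and local Tjurina number of C at p = (0:0:1) are equal: μ_p(C) = τ_p(C) = 13. In particular, the singularity of C at p is quasi-homogeneous. -/

import Mathlib

namespace W13
open MvPowerSeries Finset
noncomputable section
abbrev R2 := MvPowerSeries (Fin 2) ℂ
def E (a b : ℕ) : Fin 2 →₀ ℕ := Finsupp.single 0 a + Finsupp.single 1 b
def M (a b : ℕ) : R2 := monomial (E a b) 1
def F1 : R2 := monomial (E 3 0) 4 + monomial (E 0 4) 1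
def F2 : R2 := monomial (E 1 3) 4
lemma E_add (a b c d : ℕ) : E a b + E c d = E (a + c) (b + d) := by
  ext i; fin_cases i <;> simp [E, Finsupp.single_apply]
lemma smul_mono (c : ℂ) (n : Fin 2 →₀ ℕ) (a : ℂ) :
    c • (monomial n a : R2) = monomial n (c * a) := ((monomial n).map_smul c a).symm
lemma M_mul_M (a b c d : ℕ) : M a b * M c d = M (a + c) (b + d) := by
  simp [M, monomial_mul_monomial, E_add]
lemma x4_eq : M 4 0 = ((1/4 : ℂ) • M 1 0) * F1 + ((-1/16 : ℂ) • M 0 1) * F2 := by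
  simp only [M, F1, F2, smul_mono, mul_one, mul_add, monomial_mul_monomial, E_add]
  norm_num
lemma y7_eq : M 0 7 = M 0 3 * F1 + (-1 : ℂ) • (M 2 0 * F2) := by
  simp only [M, F1, F2, mul_add, monomial_mul_monomial, E_add, smul_mono, one_mul, mul_one]
  norm_num
lemma y4t_eq (t : ℕ) : M 0 (t + 4) = M 0 t * F1 + (-4 : ℂ) • M 3 t := by
  simp only [M, F1, smul_mono, mul_add, monomial_mul_monomial, E_add, one_mul, mul_one]
  norm_num
lemma xy3_eq : M 1 3 = (1/4 : ℂ) • F2 := by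
  simp [M, F2, smul_mono]

def J : Ideal R2 := Ideal.span {F1, F2}
lemma F1_mem : F1 ∈ J := Ideal.subset_span (by simp)
lemma F2_mem : F2 ∈ J := Ideal.subset_span (by simp)
lemma x4_mem : M 4 0 ∈ J := by
  rw [x4_eq]; exact add_mem (J.mul_mem_left _ F1_mem) (J.mul_mem_left _ F2_mem)
lemma y7_mem : M 0 7 ∈ J := by
  rw [y7_eq, neg_one_smul]
  exact add_mem (J.mul_mem_left _ F1_mem) (neg_mem (J.mul_mem_left _ F2_mem))
lemma xy3_mem : M 1 3 ∈ J := by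
  have : M 1 3 = ((1/4 : ℂ) • (1 : R2)) * F2 := by rw [smul_mul_assoc, one_mul]; exact xy3_eq
  rw [this]; exact J.mul_mem_left _ F2_mem

def m (k : Fin 13) : R2 := M (k.val % 4) (k.val / 4)
def N : Submodule ℂ R2 := Submodule.span ℂ (Set.range m) ⊔ J.restrictScalars ℂ

lemma memN_of_memJ {x : R2} (h : x ∈ J) : x ∈ N := Submodule.mem_sup_right h
lemma memN_of_basis {x : R2} (k : Fin 13) (h : m k = x) : x ∈ N :=
  Submodule.mem_sup_left (Submodule.subset_span ⟨k, h⟩)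

lemma mono_mem (i j : ℕ) : M i j ∈ N := by
  by_cases h4 : 4 ≤ i
  · refine memN_of_memJ ?_
    obtain ⟨i', rfl⟩ : ∃ i', i = 4 + i' := ⟨i - 4, by omega⟩
    have : M (4 + i') j = M 4 0 * M i' j := by rw [M_mul_M, zero_add]
    rw [this]; exact J.mul_mem_right _ x4_mem
  by_cases hxy : 1 ≤ i ∧ 3 ≤ j
  · refine memN_of_memJ ?_
    obtain ⟨i', rfl⟩ : ∃ i', i = i' + 1 := ⟨i - 1, by omega⟩
    obtain ⟨j', rfl⟩ : ∃ j', j = j' + 3 := ⟨j - 3, by omega⟩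
    rw [← M_mul_M]; exact J.mul_mem_left _ xy3_mem
  by_cases h7 : i = 0 ∧ 7 ≤ j
  · refine memN_of_memJ ?_
    obtain ⟨rfl, hj⟩ := h7
    obtain ⟨j', rfl⟩ : ∃ j', j = j' + 7 := ⟨j - 7, by omega⟩
    have : M 0 (j' + 7) = M 0 j' * M 0 7 := by rw [M_mul_M, add_zero]
    rw [this]; exact J.mul_mem_left _ y7_mem
  by_cases h46 : i = 0 ∧ 4 ≤ j ∧ j ≤ 6
  · obtain ⟨rfl, hj4, hj6⟩ := h46
    have hj : j = (j - 4) + 4 := by omega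
    rw [hj, y4t_eq]
    refine add_mem (memN_of_memJ (J.mul_mem_left _ F1_mem)) (Submodule.smul_mem _ _ ?_)
    have ht : j - 4 ≤ 2 := by omega
    interval_cases hh : (j - 4)
    · exact Submodule.mem_sup_left (Submodule.subset_span ⟨3, rfl⟩)
    · exact Submodule.mem_sup_left (Submodule.subset_span ⟨7, rfl⟩)
    · exact Submodule.mem_sup_left (Submodule.subset_span ⟨11, rfl⟩)
  · have hi : i ≤ 3 := by omega
    have hj : j ≤ 3 := by omega
    interval_cases i <;> interval_cases j
    · exact memN_of_basis 0 (rfl)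
    · exact memN_of_basis 4 (rfl)
    · exact memN_of_basis 8 (rfl)
    · exact memN_of_basis 12 (rfl)
    · exact memN_of_basis 1 (rfl)
    · exact memN_of_basis 5 (rfl)
    · exact memN_of_basis 9 (rfl)
    · omega
    · exact memN_of_basis 2 (rfl)
    · exact memN_of_basis 6 (rfl)
    · exact memN_of_basis 10 (rfl)
    · omega
    · exact memN_of_basis 3 (rfl)
    · exact memN_of_basis 7 (rfl)
    · exact memN_of_basis 11 (rfl)
    · omega

@[simp] lemma E_apply0 (a b : ℕ) : E a b 0 = a := by simp [E]
@[simp] lemma E_apply1 (a b : ℕ) : E a b 1 = b := by simp [E, Finsupp.single_apply]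
lemma E_eta (d : Fin 2 →₀ ℕ) : E (d 0) (d 1) = d := by
  ext i; fin_cases i <;> simp
lemma E_le_iff {a b : ℕ} {d : Fin 2 →₀ ℕ} : E a b ≤ d ↔ a ≤ d 0 ∧ b ≤ d 1 := by
  rw [Finsupp.le_def]
  constructor
  · exact fun h => ⟨by simpa using h 0, by simpa using h 1⟩
  · rintro ⟨h0, h1⟩ i
    fin_cases i <;> simpa
lemma eq_E_iff {a b : ℕ} {d : Fin 2 →₀ ℕ} : d = E a b ↔ d 0 = a ∧ d 1 = b := by
  constructor
  · rintro rfl; simp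
  · rintro ⟨h0, h1⟩; rw [← E_eta d, h0, h1]

@[simp] lemma E_inj {a b c d : ℕ} : E a b = E c d ↔ a = c ∧ b = d := by
  rw [eq_comm, eq_E_iff]; simp [eq_comm]
lemma E_zero : E 0 0 = 0 := by ext i; fin_cases i <;> simp
@[simp] lemma zero_eq_E {a b : ℕ} : (0 : Fin 2 →₀ ℕ) = E a b ↔ a = 0 ∧ b = 0 := by
  rw [← E_zero, E_inj]; simp [eq_comm]
@[simp] lemma E_eq_zero {a b : ℕ} : E a b = (0 : Fin 2 →₀ ℕ) ↔ a = 0 ∧ b = 0 := by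
  rw [← E_zero, E_inj]

def Af (f : R2) : R2 := fun d => coeff (d + E 4 0) f
lemma coeff_Af (f : R2) (d : Fin 2 →₀ ℕ) : coeff d (Af f) = coeff (d + E 4 0) f := rfl
def Cf (f : R2) : R2 := fun d => if d 0 ≤ 3 then coeff (d + E 0 7) f else 0
lemma coeff_Cf (f : R2) (d : Fin 2 →₀ ℕ) :
    coeff d (Cf f) = if d 0 ≤ 3 then coeff (d + E 0 7) f else 0 := rfl
def P (f : R2) : R2 :=
  ∑ ij ∈ range 4 ×ˢ range 7, monomial (E ij.1 ij.2) (coeff (E ij.1 ij.2) f)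

lemma coeff_P (f : R2) (d : Fin 2 →₀ ℕ) :
    coeff d (P f) = if d 0 < 4 ∧ d 1 < 7 then coeff d f else 0 := by
  rw [P, map_sum]
  rw [Finset.sum_congr rfl (fun ij _ => ?_)]
  · rw [Finset.sum_ite_eq' (range 4 ×ˢ range 7) (d 0, d 1)
      (fun ij => coeff (E ij.1 ij.2) f)]
    simp [Finset.mem_product, E_eta]
  · rw [coeff_monomial]
    refine if_congr ?_ rfl rfl
    rw [eq_E_iff, Prod.ext_iff]
    constructor
    · exact fun h => ⟨h.1.symm, h.2.symm⟩
    · exact fun h => ⟨h.1.symm, h.2.symm⟩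

lemma decomp (f : R2) : f = P f + M 4 0 * Af f + M 0 7 * Cf f := by
  apply MvPowerSeries.ext; intro d
  rw [map_add, map_add, coeff_P, M, M, coeff_monomial_mul, coeff_monomial_mul]
  rcases le_or_gt 4 (d 0) with h0 | h0
  · have hle : E 4 0 ≤ d := E_le_iff.mpr ⟨h0, Nat.zero_le _⟩
    rw [if_neg (by omega), if_pos hle, one_mul, coeff_Af, tsub_add_cancel_of_le hle]
    have : coeff d f + (if E 0 7 ≤ d then 1 * coeff (d - E 0 7) (Cf f) else 0)
        = coeff d f + 0 := by
      congr 1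
      split_ifs with h
      · rw [one_mul, coeff_Cf, if_neg (by simp [Finsupp.tsub_apply]; omega)]
      · rfl
    rw [zero_add]
    rw [this, add_zero]
  · rcases le_or_gt 7 (d 1) with h1 | h1
    · have hle : E 0 7 ≤ d := E_le_iff.mpr ⟨Nat.zero_le _, h1⟩
      rw [if_neg (by omega), if_neg (by rw [E_le_iff]; omega), if_pos hle, one_mul, coeff_Cf,
        if_pos (by simp [Finsupp.tsub_apply]; omega), tsub_add_cancel_of_le hle]
      ring
    · rw [if_pos ⟨h0, h1⟩, if_neg (by rw [E_le_iff]; omega), if_neg (by rw [E_le_iff]; omega)]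
      ring

lemma E_sub (a b c d : ℕ) : E a b - E c d = E (a - c) (b - d) := by
  ext i; fin_cases i <;> simp [Finsupp.tsub_apply]

lemma mem_N (f : R2) : f ∈ N := by
  rw [decomp f]
  refine add_mem (add_mem ?_ ?_) ?_
  · refine Submodule.sum_mem _ (fun ij _ => ?_)
    have : monomial (E ij.1 ij.2) (coeff (E ij.1 ij.2) f)
        = coeff (E ij.1 ij.2) f • M ij.1 ij.2 := by rw [M, smul_mono, mul_one]
    rw [this]
    exact Submodule.smul_mem _ _ (mono_mem _ _)
  · exact memN_of_memJ (J.mul_mem_right _ x4_mem)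
  · exact memN_of_memJ (J.mul_mem_right _ y7_mem)

instance : CommRing (R2 ⧸ J) := Ideal.Quotient.commRing J
instance : Algebra ℂ (R2 ⧸ J) := Ideal.Quotient.algebra ℂ

def v (k : Fin 13) : R2 ⧸ J := Ideal.Quotient.mkₐ ℂ J (m k)

lemma span_v : Submodule.span ℂ (Set.range v) = ⊤ := by
  rw [Submodule.eq_top_iff']
  intro q
  obtain ⟨f, rfl⟩ := Ideal.Quotient.mkₐ_surjective ℂ J q
  obtain ⟨s, hs, j, hj, rfl⟩ := Submodule.mem_sup.mp (mem_N f)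
  have hj0 : Ideal.Quotient.mkₐ ℂ J j = 0 := by
    rw [Ideal.Quotient.mkₐ_eq_mk, Ideal.Quotient.eq_zero_iff_mem]
    exact hj
  rw [map_add, hj0, add_zero]
  have : Ideal.Quotient.mkₐ ℂ J s ∈
      Submodule.map (Ideal.Quotient.mkₐ ℂ J).toLinearMap (Submodule.span ℂ (Set.range m)) :=
    ⟨s, hs, rfl⟩
  rwa [Submodule.map_span, ← Set.range_comp] at this

lemma coeff_comb (a b : R2) (d : Fin 2 →₀ ℕ) : coeff d (a * F1 + b * F2) =
    (if E 3 0 ≤ d then coeff (d - E 3 0) a * 4 else 0)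
    + (if E 0 4 ≤ d then coeff (d - E 0 4) a else 0)
    + (if E 1 3 ≤ d then coeff (d - E 1 3) b * 4 else 0) := by
  rw [F1, F2, mul_add, map_add, map_add, coeff_mul_monomial, coeff_mul_monomial,
    coeff_mul_monomial]
  simp only [mul_one]

set_option maxHeartbeats 1000000 in
lemma indep_v : LinearIndependent ℂ v := by
  rw [Fintype.linearIndependent_iff]
  intro c hc
  have hmem : (∑ k, c k • m k) ∈ Ideal.span {F1, F2} := by
    have h2 : Ideal.Quotient.mkₐ ℂ J (∑ k, c k • m k) = 0 := by
      rw [map_sum]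
      simpa only [map_smul, v] using hc
    rw [Ideal.Quotient.mkₐ_eq_mk, Ideal.Quotient.eq_zero_iff_mem] at h2
    exact h2
  obtain ⟨a, b, hab⟩ := Ideal.mem_span_pair.mp hmem
  have hco : ∀ x y : ℕ, coeff (E x y) (∑ k, c k • m k) =
      ∑ k : Fin 13, c k * (if E x y = E (↑k % 4) (↑k / 4) then 1 else 0) := by
    intro x y
    rw [map_sum]
    refine Finset.sum_congr rfl (fun k _ => ?_)
    rw [LinearMap.map_smul, m, M, coeff_monomial, smul_eq_mul]
  have key : ∀ x y : ℕ, coeff (E x y) (a * F1 + b * F2) =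
      ∑ k : Fin 13, c k * (if E x y = E (↑k % 4) (↑k / 4) then 1 else 0) := by
    intro x y; rw [hab, hco]
  intro k
  have h00 := key 0 0
  have h10 := key 1 0
  have h20 := key 2 0
  have h01 := key 0 1
  have h11 := key 1 1
  have h21 := key 2 1
  have h02 := key 0 2
  have h12 := key 1 2
  have h22 := key 2 2
  have h03 := key 0 3
  have h04 := key 0 4
  have h05 := key 0 5
  have h06 := key 0 6
  have h30 := key 3 0
  have h31 := key 3 1
  have h32 := key 3 2
  simp only [coeff_comb, E_le_iff, E_apply0, E_apply1] at h04 h05 h06 h30 h31 h32 h00 h10 h20 h01 h11 h21 h02 h12 h22 h03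
  norm_num [E_inj, E_sub, Fin.sum_univ_succ] at h04 h05 h06 h30 h31 h32 h00 h10 h20 h01 h11 h21 h02 h12 h22 h03 ⊢
  fin_cases k
  · exact h00.symm
  · exact h10.symm
  · exact h20.symm
  · exact (show c (Fin.succ 2) = 0 by rw [← h30, h04, zero_mul])
  · exact h01.symm
  · exact h11.symm
  · exact h21.symm
  · exact (show c (Fin.succ 2).succ.succ.succ.succ = 0 by rw [← h31, h05, zero_mul])
  · exact h02.symm
  · exact h12.symm
  · exact h22.symm
  · exact (show c (Fin.succ 2).succ.succ.succ.succ.succ.succ.succ.succ = 0 by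
      rw [← h32, h06, zero_mul])
  · exact h03.symm

lemma finrank13 : Module.finrank ℂ (R2 ⧸ J) = 13 := by
  let bQ : Module.Basis (Fin 13) ℂ (R2 ⧸ J) := Module.Basis.mk indep_v (by rw [span_v])
  rw [Module.finrank_eq_card_basis bQ, Fintype.card_fin]

lemma single0E (n : ℕ) : Finsupp.single (0 : Fin 2) n = E n 0 := by
  ext i; fin_cases i <;> simp [E, Finsupp.single_apply]
lemma single1E (n : ℕ) : Finsupp.single (1 : Fin 2) n = E 0 n := by
  ext i; fin_cases i <;> simp [E, Finsupp.single_apply]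

lemma four_mul_mono (e : Fin 2 →₀ ℕ) : (4 : R2) * monomial e 1 = monomial e 4 := by
  have h4 : (4 : R2) = monomial 0 4 := by
    rw [monomial_zero_eq_C_apply]
    exact (map_ofNat ((C : ℂ →+* R2)) 4).symm
  rw [h4, monomial_mul_monomial, zero_add]
  norm_num

lemma coe_d0 : (((MvPolynomial.pderiv 0 ((MvPolynomial.X 0 : MvPolynomial (Fin 2) ℂ) ^ 4
    + MvPolynomial.X 0 * MvPolynomial.X 1 ^ 4)) : MvPolynomial (Fin 2) ℂ) : R2) = F1 := by
  have h : (MvPolynomial.pderiv 0 ((MvPolynomial.X 0 : MvPolynomial (Fin 2) ℂ) ^ 4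
      + MvPolynomial.X 0 * MvPolynomial.X 1 ^ 4)) = 4 * MvPolynomial.X 0 ^ 3
      + MvPolynomial.X 1 ^ 4 := by
    simp [MvPolynomial.pderiv_X]
  rw [h]
  push_cast
  rw [show ((4 : MvPolynomial (Fin 2) ℂ) : R2) = 4 from
    map_ofNat MvPolynomial.coeToMvPowerSeries.ringHom 4]
  rw [X_pow_eq, X_pow_eq, single0E, single1E, four_mul_mono, F1]

lemma coe_d1 : (((MvPolynomial.pderiv 1 ((MvPolynomial.X 0 : MvPolynomial (Fin 2) ℂ) ^ 4
    + MvPolynomial.X 0 * MvPolynomial.X 1 ^ 4)) : MvPolynomial (Fin 2) ℂ) : R2) = F2 := by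
  have h : (MvPolynomial.pderiv 1 ((MvPolynomial.X 0 : MvPolynomial (Fin 2) ℂ) ^ 4
      + MvPolynomial.X 0 * MvPolynomial.X 1 ^ 4)) = 4 * (MvPolynomial.X 0
      * MvPolynomial.X 1 ^ 3) := by
    simp [MvPolynomial.pderiv_X]; ring
  rw [h]
  push_cast
  rw [show ((4 : MvPolynomial (Fin 2) ℂ) : R2) = 4 from
    map_ofNat MvPolynomial.coeToMvPowerSeries.ringHom 4]
  rw [X_pow_eq, X_def, monomial_mul_monomial, one_mul, four_mul_mono,
    single0E 1, single1E 3, E_add, F2]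

lemma coe_g : (((MvPolynomial.X 0 : MvPolynomial (Fin 2) ℂ) ^ 4
    + MvPolynomial.X 0 * MvPolynomial.X 1 ^ 4 : MvPolynomial (Fin 2) ℂ) : R2)
    = M 4 0 + M 1 4 := by
  push_cast
  rw [X_pow_eq, X_pow_eq, X_def, monomial_mul_monomial, one_mul,
    single0E, single0E, single1E, E_add, M, M]

lemma g_mem : M 4 0 + M 1 4 ∈ J := by
  refine add_mem x4_mem ?_
  have : M 1 4 = M 0 1 * M 1 3 := by rw [M_mul_M]
  rw [this]
  exact J.mul_mem_left _ xy3_mem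
end
end W13

open MvPolynomial

set_option maxHeartbeats 1000000 in
/-- For the quartic `C = V(x₀(x₀³x₂ + x₁⁴))`, with local equation `g = x₀⁴ + x₀x₁⁴`
at `p = (0:0:1)`, the local Milnor and Tjurina numbers both equal 13; in particular
the singularity at `p` is quasi-homogeneous. -/
theorem quartic_W13_quasi_homogeneous :
    (Module.finrank ℂ (MvPowerSeries (Fin 2) ℂ ⧸
        Ideal.span {((pderiv 0 ((X 0 : MvPolynomial (Fin 2) ℂ) ^ 4 + X 0 * X 1 ^ 4) :
            MvPolynomial (Fin 2) ℂ) : MvPowerSeries (Fin 2) ℂ),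
          ((pderiv 1 ((X 0 : MvPolynomial (Fin 2) ℂ) ^ 4 + X 0 * X 1 ^ 4) :
            MvPolynomial (Fin 2) ℂ) : MvPowerSeries (Fin 2) ℂ)}) = 13) ∧
    (Module.finrank ℂ (MvPowerSeries (Fin 2) ℂ ⧸
        Ideal.span {((pderiv 0 ((X 0 : MvPolynomial (Fin 2) ℂ) ^ 4 + X 0 * X 1 ^ 4) :
            MvPolynomial (Fin 2) ℂ) : MvPowerSeries (Fin 2) ℂ),
          ((pderiv 1 ((X 0 : MvPolynomial (Fin 2) ℂ) ^ 4 + X 0 * X 1 ^ 4) :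
            MvPolynomial (Fin 2) ℂ) : MvPowerSeries (Fin 2) ℂ),
          (((X 0 : MvPolynomial (Fin 2) ℂ) ^ 4 + X 0 * X 1 ^ 4 :
            MvPolynomial (Fin 2) ℂ) : MvPowerSeries (Fin 2) ℂ)}) = 13) := by
  constructor
  · rw [W13.coe_d0, W13.coe_d1]
    exact W13.finrank13
  · rw [W13.coe_d0, W13.coe_d1, W13.coe_g]
    have hspan : Ideal.span {W13.F1, W13.F2, W13.M 4 0 + W13.M 1 4} = W13.J := by
      apply le_antisymm
      · rw [Ideal.span_le]
        intro x hx
        simp only [Set.mem_insert_iff, Set.mem_singleton_iff] at hx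
        rcases hx with rfl | rfl | rfl
        · exact W13.F1_mem
        · exact W13.F2_mem
        · exact W13.g_mem
      · refine Ideal.span_mono ?_
        intro x hx
        simp only [Set.mem_insert_iff, Set.mem_singleton_iff] at hx ⊢
        tauto
    rw [hspan]
    exact W13.finrank13
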